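/- arXiv:1705.00572 — 4 statements merged into one kernel-verified Lean document; each statement's English description precedes it below -/
import Mathlib

section
/- Let A be a unital C*-algebra with a faithful state f. Then for every positive element y of A, the C*-norm of y equals the supremum over nonzero elements b of A of |f(b* y b)| / f(b* b). -/
set_option maxHeartbeats 1000000


open scoped ComplexOrder

lemma aux_norm_eq_re {z : ℂ} (hz : 0 ≤ z) : ‖z‖ = z.re := by
  obtain ⟨h1, h2⟩ := Complex.le_def.mp hz
  simp only [Complex.zero_re, Complex.zero_im] at h1 h2
  have : z = (z.re : ℂ) := Complex.ext rfl h2.symm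
  rw [this, Complex.norm_real, Real.norm_eq_abs, abs_of_nonneg h1, Complex.ofReal_re]

/-- For a unital C*-algebra `A` with a faithful state `f`, the norm of every
positive element `y` equals `⨆ b ≠ 0, |f (b* y b)| / f (b* b)`. -/
theorem stmt0 {A : Type*} [NormedRing A] [StarRing A] [CStarRing A]
    [NormedAlgebra ℂ A] [CompleteSpace A] [StarModule ℂ A] [NormOneClass A]
    [PartialOrder A] [StarOrderedRing A] [Nontrivial A]
    (f : A →ₗ[ℂ] ℂ)
    (hpos : ∀ a : A, 0 ≤ f (star a * a))
    (hone : f 1 = 1)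
    (hfaithful : ∀ a : A, f (star a * a) = 0 → a = 0) :
    ∀ y : A, 0 ≤ y →
      ‖y‖ = ⨆ b : {b : A // b ≠ 0},
        ‖f (star (b : A) * y * (b : A))‖ / (f (star (b : A) * (b : A))).re := by
  letI : CStarAlgebra A := { }
  intro y hy
  have hy' : IsSelfAdjoint y := .of_nonneg hy
  -- f is nonnegative on nonnegative elements
  have hf : ∀ x : A, 0 ≤ x → 0 ≤ f x := by
    intro x hx
    rw [StarOrderedRing.nonneg_iff] at hx
    induction hx using AddSubmonoid.closure_induction with
    | mem z hz => obtain ⟨s, rfl⟩ := hz; exact hpos s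
    | zero => simp
    | add u v hu hv hpu hpv => rw [map_add]; exact add_nonneg hpu hpv
  have hmono : ∀ x z : A, x ≤ z → (f x).re ≤ (f z).re := by
    intro x z hxz
    have h := hf _ (sub_nonneg.mpr hxz)
    rw [map_sub] at h
    have := (Complex.le_def.mp h).1
    simp only [Complex.zero_re, Complex.sub_re] at this
    linarith
  -- denominators are positive
  have hden : ∀ b : A, b ≠ 0 → 0 < (f (star b * b)).re := by
    intro b hb
    obtain ⟨h1, h2⟩ := Complex.le_def.mp (hpos b)
    simp only [Complex.zero_re, Complex.zero_im] at h1 h2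
    rcases lt_or_eq_of_le h1 with h | h
    · exact h
    · exact absurd (hfaithful b (Complex.ext h.symm h2.symm)) hb
  -- numerators are nonnegative
  have hnum : ∀ b : A, 0 ≤ f (star b * y * b) := by
    intro b
    apply hf
    simpa using star_left_conjugate_le_conjugate hy b
  -- upper bound
  have hub : ∀ b : A, b ≠ 0 → ‖f (star b * y * b)‖ / (f (star b * b)).re ≤ ‖y‖ := by
    intro b hb
    rw [div_le_iff₀ (hden b hb), aux_norm_eq_re (hnum b)]
    have h1 : star b * y * b ≤ star b * algebraMap ℝ A ‖y‖ * b :=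
      star_left_conjugate_le_conjugate hy'.le_algebraMap_norm_self b
    have h2 : star b * algebraMap ℝ A ‖y‖ * b = ‖y‖ • (star b * b) := by
      rw [Algebra.algebraMap_eq_smul_one]
      rw [mul_smul_comm, mul_one, smul_mul_assoc]
    rw [h2] at h1
    have h3 := hmono _ _ h1
    rw [LinearMap.map_smul_of_tower] at h3
    rw [Complex.real_smul, Complex.re_ofReal_mul] at h3
    exact h3
  -- lower bound: for every ε > 0 there is a witness
  have hlb : ∀ ε : ℝ, 0 < ε → ∃ b : {b : A // b ≠ 0},
      ‖y‖ - ε ≤ ‖f (star (b : A) * y * (b : A))‖ / (f (star (b : A) * (b : A))).re := by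
    intro ε hε
    set c : ℝ := ‖y‖ - ε with hc
    set h : ℝ → ℝ := fun t => max (t - c) 0 with hh
    have hcont : Continuous h := (continuous_id.sub continuous_const).max continuous_const
    have hcont' : ∀ s : Set ℝ, ContinuousOn h s := fun s => hcont.continuousOn
    set b : A := cfc h y with hbdef
    have hbsa : IsSelfAdjoint b := cfc_predicate h y
    have hspec : ‖y‖ ∈ spectrum ℝ y := CStarAlgebra.norm_mem_spectrum_of_nonneg hy
    have hhnorm : h ‖y‖ = ε := by simp [hh, hc, hε.le]
    have hb0 : b ≠ 0 := by
      intro hb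
      have hlt : ‖b‖ < ε := by rw [hb, norm_zero]; exact hε
      have := (norm_cfc_lt_iff h y hε (hcont' _) hy').mp hlt ‖y‖ hspec
      rw [hhnorm, Real.norm_eq_abs, abs_of_nonneg hε.le] at this
      exact lt_irrefl _ this
    have hbyb : star b * y * b = cfc (fun t => h t * t * h t) y := by
      rw [hbsa.star_eq]
      conv_lhs => rw [← cfc_id ℝ y hy']
      rw [← cfc_mul _ _ y (hcont' _) continuousOn_id,
        ← cfc_mul (fun x => h x * id x) h y (((hcont' _).mul continuousOn_id)) (hcont' _)]
      rfl
    have hbb : star b * b = cfc (fun t => h t * h t) y := by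
      rw [hbsa.star_eq, ← cfc_mul _ _ y (hcont' _) (hcont' _)]
    have hkey : c • (star b * b) ≤ star b * y * b := by
      rw [hbyb, hbb, ← cfc_const_mul c (fun t => h t * h t) y ((hcont' _).mul (hcont' _)),
        ← sub_nonneg,
        ← cfc_sub (fun t => h t * t * h t) (fun t => c * (h t * h t)) y
          (((hcont' _).mul continuousOn_id).mul (hcont' _))
          (continuousOn_const.mul ((hcont' _).mul (hcont' _)))]
      apply cfc_nonneg
      intro t _
      have h1 : 0 ≤ h t := le_max_right _ _
      rcases le_or_gt t c with ht | ht
      · have h2 : h t = 0 := max_eq_right (by linarith)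
        simp [h2]
      · have h2 : h t = t - c := max_eq_left (by linarith)
        nlinarith
    have h3 := hmono _ _ hkey
    rw [LinearMap.map_smul_of_tower, Complex.real_smul, Complex.re_ofReal_mul] at h3
    refine ⟨⟨b, hb0⟩, ?_⟩
    rw [aux_norm_eq_re (hnum b), le_div_iff₀ (hden b hb0)]
    calc (‖y‖ - ε) * (f (star b * b)).re = c * (f (star b * b)).re := by rw [hc]
      _ ≤ (f (star b * y * b)).re := h3
  -- conclude
  have hne : Nonempty {b : A // b ≠ 0} := ⟨⟨1, one_ne_zero⟩⟩
  have hbdd : BddAbove (Set.range fun b : {b : A // b ≠ 0} =>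
      ‖f (star (b : A) * y * (b : A))‖ / (f (star (b : A) * (b : A))).re) := by
    refine ⟨‖y‖, ?_⟩
    rintro x ⟨b, rfl⟩
    exact hub b b.2
  refine le_antisymm ?_ (ciSup_le fun b => hub b b.2)
  refine le_of_forall_pos_le_add ?_
  intro ε hε
  obtain ⟨b, hb⟩ := hlb ε hε
  have := le_ciSup hbdd b
  linarith
end

section
/- Let A be a C*-algebra with a faithful state f, and let E₁, E₂ be inner product A-modules. If V : E₁ → E₂ is an A-module map satisfying f(⟨x,y⟩_{E₁}) = f(⟨Vx,Vy⟩_{E₂}) for all x, y, then V is isometric with respect to the Hilbert module norms: ‖Vx‖_{E₂} = ‖x‖_{E₁} for all x ∈ E₁. -/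
open scoped ComplexOrder

/-- an `A`-module map between inner product `A`-modules which is a
2-isometry with respect to a faithful state `f` is isometric for the Hilbert module
norms, i.e. `‖⟨Vx, Vx⟩‖ = ‖⟨x, x⟩‖` for all `x`. -/
theorem stmt2 {A : Type*} [CStarAlgebra A] [PartialOrder A] [StarOrderedRing A]
    (f : A →ₗ[ℂ] ℂ)
    (hpos : ∀ a : A, 0 ≤ f (star a * a))
    (hone : f 1 = 1)
    (hfaithful : ∀ a : A, f (star a * a) = 0 → a = 0)
    {E₁ E₂ : Type*} [AddCommGroup E₁] [AddCommGroup E₂]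
    (smul₁ : E₁ → A → E₁) (smul₂ : E₂ → A → E₂)
    (ip₁ : E₁ → E₁ → A) (ip₂ : E₂ → E₂ → A)
    -- the inner products are positive, conjugate-symmetric, additive and `A`-sesquilinear
    (hip₁pos : ∀ x, 0 ≤ ip₁ x x) (hip₂pos : ∀ x, 0 ≤ ip₂ x x)
    (hip₁star : ∀ x y, star (ip₁ x y) = ip₁ y x) (hip₂star : ∀ x y, star (ip₂ x y) = ip₂ y x)
    (hip₁add : ∀ x y z, ip₁ x (y + z) = ip₁ x y + ip₁ x z)
    (hip₂add : ∀ x y z, ip₂ x (y + z) = ip₂ x y + ip₂ x z)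
    (hip₁smul : ∀ x y b, ip₁ x (smul₁ y b) = ip₁ x y * b)
    (hip₂smul : ∀ x y b, ip₂ x (smul₂ y b) = ip₂ x y * b)
    (V : E₁ → E₂)
    (hVadd : ∀ x y, V (x + y) = V x + V y)
    (hVmod : ∀ x b, V (smul₁ x b) = smul₂ (V x) b)
    (h2iso : ∀ x y, f (ip₁ x y) = f (ip₂ (V x) (V y))) :
    ∀ x, ‖ip₂ (V x) (V x)‖ = ‖ip₁ x x‖ := by
  intro x
  set p := ip₁ x x with hp
  set q := ip₂ (V x) (V x) with hq
  have hsp : star p = p := hip₁star x x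
  have hsq : star q = q := hip₂star (V x) (V x)
  have key : ∀ b : A, f (star b * p * b) = f (star b * q * b) := by
    intro b
    have e1 : ip₁ (smul₁ x b) (smul₁ x b) = star b * p * b := by
      rw [hip₁smul, ← hip₁star, hip₁smul, star_mul, hip₁star, hp]
    have e2 : ip₂ (V (smul₁ x b)) (V (smul₁ x b)) = star b * q * b := by
      rw [hVmod, hip₂smul, ← hip₂star, hip₂smul, star_mul, hip₂star, hq]
    have := h2iso (smul₁ x b) (smul₁ x b)
    rw [e1, e2] at this
    exact this
  set a := p - q with ha
  have hsa : star a = a := by rw [ha, star_sub, hsp, hsq]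
  have h0 : ∀ b : A, f (star b * a * b) = 0 := by
    intro b
    have hb : star b * a * b = star b * p * b - star b * q * b := by
      rw [ha, mul_sub, sub_mul]
    rw [hb, map_sub, key, sub_self]
  have hcd : ∀ c d : A, f (star c * a * d) = 0 := by
    intro c d
    have e1 : f (star (c + d) * a * (c + d)) =
        f (star c * a * c) + f (star c * a * d) + f (star d * a * c)
          + f (star d * a * d) := by
      rw [star_add]
      simp only [add_mul, mul_add, map_add]
      ring
    have e2 : f (star (c + Complex.I • d) * a * (c + Complex.I • d)) =
        f (star c * a * c) + Complex.I * f (star c * a * d)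
          - Complex.I * f (star d * a * c) + f (star d * a * d) := by
      have expand : star (c + Complex.I • d) * a * (c + Complex.I • d)
          = star c * a * c + Complex.I • (star c * a * d)
            + (-Complex.I) • (star d * a * c)
            + ((-Complex.I) * Complex.I) • (star d * a * d) := by
        rw [star_add, star_smul]
        simp only [Complex.star_def, Complex.conj_I]
        simp only [add_mul, mul_add, smul_mul_assoc, mul_smul_comm, smul_smul]
        module
      rw [expand]
      simp only [map_add, map_smul, smul_eq_mul, neg_mul]
      linear_combination (-f (star d * a * d)) * Complex.I_sq
    rw [h0 (c + d), h0 c, h0 d] at e1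
    rw [h0 (c + Complex.I • d), h0 c, h0 d] at e2
    have h3 : f (star c * a * d) = f (star d * a * c) := by
      have hI : Complex.I * (f (star c * a * d) - f (star d * a * c)) = 0 := by
        linear_combination -e2
      rcases mul_eq_zero.mp hI with h | h
      · exact absurd h Complex.I_ne_zero
      · exact sub_eq_zero.mp h
    have h4 : f (star c * a * d) + f (star d * a * c) = 0 := by linear_combination -e1
    linear_combination (h3 + h4) / 2
  have haz : a = 0 := by
    apply hfaithful
    have := hcd a 1
    rwa [mul_one] at this
  have hpq : p = q := sub_eq_zero.mp haz
  rw [← hpq]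
end

section
/- A surjective A-linear isometry F : E₁ → E₂ between Hilbert C*-modules over a C*-algebra A preserves the A-valued inner products: ⟨Fx, Fy⟩_{E₂} = ⟨x, y⟩_{E₁} for all x, y ∈ E₁, i.e., F is a unitary adjointable operator. -/
open scoped ComplexOrder

open scoped ComplexOrder

lemma aux_le {A : Type*} [CStarAlgebra A] [PartialOrder A] [StarOrderedRing A]
    {p q : A} (hp : 0 ≤ p) (hq : 0 ≤ q)
    (h : ∀ b : A, ‖star b * q * b‖ ≤ ‖star b * p * b‖) : q ≤ p := by
  have hpsa : IsSelfAdjoint p := .of_nonneg hp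
  have key : ∀ ε : ℝ, 0 < ε → q ≤ p + algebraMap ℝ A ε := by
    intro ε hε
    have hsp : ∀ t ∈ spectrum ℝ p, 0 ≤ t := fun t ht => spectrum_nonneg_of_nonneg hp ht
    set f : ℝ → ℝ := fun t => (Real.sqrt (t + ε))⁻¹ with hf
    set g : ℝ → ℝ := fun t => Real.sqrt (t + ε) with hg
    have hgpos : ∀ t ∈ spectrum ℝ p, 0 < g t := by
      intro t ht
      exact Real.sqrt_pos.mpr (by linarith [hsp t ht])
    have hgc : ContinuousOn g (spectrum ℝ p) :=
      (Real.continuous_sqrt.comp (continuous_id.add continuous_const)).continuousOn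
    have hfc : ContinuousOn f (spectrum ℝ p) :=
      hgc.inv₀ (fun t ht => (hgpos t ht).ne')
    set v : A := cfc f p with hv
    set u : A := cfc g p with hu
    have hvsa : IsSelfAdjoint v := cfc_predicate f p
    have husa : IsSelfAdjoint u := cfc_predicate g p
    have huv : u * v = 1 := by
      rw [hu, hv, ← cfc_mul g f p hgc hfc,
        cfc_congr (g := fun _ : ℝ => (1 : ℝ)) fun t ht => mul_inv_cancel₀ (hgpos t ht).ne',
        cfc_const 1 p hpsa, map_one]
    have hvu : v * u = 1 := by
      rw [hu, hv, ← cfc_mul f g p hfc hgc,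
        cfc_congr (g := fun _ : ℝ => (1 : ℝ)) fun t ht => inv_mul_cancel₀ (hgpos t ht).ne',
        cfc_const 1 p hpsa, map_one]
    have hvpv : v * p * v ≤ 1 := by
      have heq : cfc (fun t : ℝ => f t * t * f t) p = v * p * v := by
        rw [cfc_mul (fun t : ℝ => f t * t) f p (hfc.mul continuous_id.continuousOn) hfc,
          cfc_mul f (fun t : ℝ => t) p hfc continuous_id.continuousOn, cfc_id' ℝ p hpsa]
      rw [← heq]
      apply cfc_le_one
      intro t ht
      have h1 : 0 < t + ε := by linarith [hsp t ht]
      have h2 : Real.sqrt (t + ε) * Real.sqrt (t + ε) = t + ε := Real.mul_self_sqrt h1.le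
      have h3 : (Real.sqrt (t + ε))⁻¹ * (Real.sqrt (t + ε))⁻¹ = (t + ε)⁻¹ := by
        rw [← mul_inv, h2]
      calc f t * t * f t = t * ((Real.sqrt (t + ε))⁻¹ * (Real.sqrt (t + ε))⁻¹) := by
            simp only [hf]; ring
        _ = t * (t + ε)⁻¹ := by rw [h3]
        _ ≤ 1 := by
            rw [← div_eq_mul_inv]
            exact (div_le_one h1).mpr (by linarith)
    have hvpv_nonneg : 0 ≤ v * p * v := by
      have := star_left_conjugate_nonneg hp v
      rwa [hvsa.star_eq] at this
    have hvqv_nonneg : 0 ≤ v * q * v := by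
      have := star_left_conjugate_nonneg hq v
      rwa [hvsa.star_eq] at this
    have hnvqv : ‖v * q * v‖ ≤ 1 := by
      calc ‖v * q * v‖ = ‖star v * q * v‖ := by rw [hvsa.star_eq]
        _ ≤ ‖star v * p * v‖ := h v
        _ = ‖v * p * v‖ := by rw [hvsa.star_eq]
        _ ≤ 1 := (CStarAlgebra.norm_le_one_iff_of_nonneg _ hvpv_nonneg).mpr hvpv
    have hvqv : v * q * v ≤ 1 :=
      (CStarAlgebra.norm_le_one_iff_of_nonneg _ hvqv_nonneg).mp hnvqv
    have hconj : u * (v * q * v) * u ≤ u * 1 * u := by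
      have := star_left_conjugate_le_conjugate hvqv u
      rwa [husa.star_eq] at this
    have huu : u * 1 * u = p + algebraMap ℝ A ε := by
      rw [mul_one, hu, ← cfc_mul g g p hgc hgc,
        cfc_congr (g := fun t : ℝ => t + ε)
          (fun t ht => Real.mul_self_sqrt (by linarith [hsp t ht])),
        cfc_add_const ε (fun t : ℝ => t) p continuous_id.continuousOn hpsa, cfc_id' ℝ p hpsa]
    have hq' : u * (v * q * v) * u = q := by
      have : u * (v * q * v) * u = (u * v) * q * (v * u) := by
        simp only [mul_assoc]
      rw [this, huv, hvu, one_mul, mul_one]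
    rw [hq', huu] at hconj
    exact hconj
  -- limit ε → 0
  have hcont : Filter.Tendsto (fun ε : ℝ => p + algebraMap ℝ A ε)
      (nhdsWithin 0 (Set.Ioi 0)) (nhds p) := by
    have : Filter.Tendsto (fun ε : ℝ => p + algebraMap ℝ A ε) (nhds 0) (nhds p) := by
      have := ((continuous_algebraMap ℝ A).tendsto 0).const_add p
      simpa using this
    exact this.mono_left nhdsWithin_le_nhds
  exact ge_of_tendsto hcont <| Filter.eventually_of_mem self_mem_nhdsWithin
    fun ε hε => key ε hε


/-- a surjective `A`-linear isometry between Hilbert C*-modules over a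
C*-algebra `A` preserves the `A`-valued inner products (so it is a unitary). -/
theorem stmt3 {A : Type*} [CStarAlgebra A] [PartialOrder A] [StarOrderedRing A]
    {E₁ E₂ : Type*} [NormedAddCommGroup E₁] [NormedAddCommGroup E₂]
    [Module ℂ E₁] [Module ℂ E₂] [CompleteSpace E₁] [CompleteSpace E₂]
    (smul₁ : E₁ → A → E₁) (smul₂ : E₂ → A → E₂)
    (ip₁ : E₁ → E₁ → A) (ip₂ : E₂ → E₂ → A)
    -- the inner products are positive definite, conjugate-symmetric, additive,
    -- and `A`-sesquilinear
    (hip₁pos : ∀ x, 0 ≤ ip₁ x x) (hip₂pos : ∀ x, 0 ≤ ip₂ x x)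
    (hip₁def : ∀ x, ip₁ x x = 0 → x = 0) (hip₂def : ∀ x, ip₂ x x = 0 → x = 0)
    (hip₁star : ∀ x y, star (ip₁ x y) = ip₁ y x) (hip₂star : ∀ x y, star (ip₂ x y) = ip₂ y x)
    (hip₁add : ∀ x y z, ip₁ x (y + z) = ip₁ x y + ip₁ x z)
    (hip₂add : ∀ x y z, ip₂ x (y + z) = ip₂ x y + ip₂ x z)
    (hip₁smul : ∀ x y b, ip₁ x (smul₁ y b) = ip₁ x y * b)
    (hip₂smul : ∀ x y b, ip₂ x (smul₂ y b) = ip₂ x y * b)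
    -- the norms on `E₁` and `E₂` are the Hilbert module norms
    (hnorm₁ : ∀ x : E₁, ‖x‖ = Real.sqrt ‖ip₁ x x‖)
    (hnorm₂ : ∀ x : E₂, ‖x‖ = Real.sqrt ‖ip₂ x x‖)
    (F : E₁ →ₗ[ℂ] E₂)
    (hFsurj : Function.Surjective F)
    (hFmod : ∀ x b, F (smul₁ x b) = smul₂ (F x) b)
    (hFisom : ∀ x : E₁, ‖F x‖ = ‖x‖) :
    ∀ x y : E₁, ip₂ (F x) (F y) = ip₁ x y := by
  have h₁smul' : ∀ x y b, ip₁ (smul₁ x b) y = star b * ip₁ x y := fun x y b => by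
    rw [← hip₁star, hip₁smul, star_mul, hip₁star]
  have h₂smul' : ∀ x y b, ip₂ (smul₂ x b) y = star b * ip₂ x y := fun x y b => by
    rw [← hip₂star, hip₂smul, star_mul, hip₂star]
  have h₁add' : ∀ x y z, ip₁ (x + y) z = ip₁ x z + ip₁ y z := fun x y z => by
    rw [← hip₁star, hip₁add, star_add, hip₁star, hip₁star]
  have h₂add' : ∀ x y z, ip₂ (x + y) z = ip₂ x z + ip₂ y z := fun x y z => by
    rw [← hip₂star, hip₂add, star_add, hip₂star, hip₂star]
  have hnsq₁ : ∀ x : E₁, ‖ip₁ x x‖ = ‖x‖ ^ 2 := fun x => by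
    rw [hnorm₁, Real.sq_sqrt (norm_nonneg _)]
  have hnsq₂ : ∀ x : E₂, ‖ip₂ x x‖ = ‖x‖ ^ 2 := fun x => by
    rw [hnorm₂, Real.sq_sqrt (norm_nonneg _)]
  have expand₁ : ∀ (x y : E₁) (b : A), ip₁ (x + smul₁ y b) (x + smul₁ y b)
      = ip₁ x x + ip₁ x y * b + star b * ip₁ y x + star b * (ip₁ y y * b) := by
    intro x y b
    rw [hip₁add, h₁add', h₁add', h₁smul', h₁smul', hip₁smul, hip₁smul]
    abel
  have expand₂ : ∀ (x y : E₂) (b : A), ip₂ (x + smul₂ y b) (x + smul₂ y b)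
      = ip₂ x x + ip₂ x y * b + star b * ip₂ y x + star b * (ip₂ y y * b) := by
    intro x y b
    rw [hip₂add, h₂add', h₂add', h₂smul', h₂smul', hip₂smul, hip₂smul]
    abel
  have step1 : ∀ z : E₁, ip₂ (F z) (F z) = ip₁ z z := by
    intro z
    have hb : ∀ b : A, ‖star b * ip₂ (F z) (F z) * b‖ = ‖star b * ip₁ z z * b‖ := by
      intro b
      have e₁ : star b * ip₁ z z * b = ip₁ (smul₁ z b) (smul₁ z b) := by
        rw [h₁smul', hip₁smul, mul_assoc]
      have e₂ : star b * ip₂ (F z) (F z) * b = ip₂ (smul₂ (F z) b) (smul₂ (F z) b) := by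
        rw [h₂smul', hip₂smul, mul_assoc]
      rw [e₁, e₂, hnsq₁, hnsq₂, ← hFmod, hFisom]
    exact le_antisymm
      (aux_le (hip₁pos z) (hip₂pos (F z)) fun b => (hb b).le)
      (aux_le (hip₂pos (F z)) (hip₁pos z) fun b => (hb b).ge)
  intro x y
  set d : A := ip₂ (F x) (F y) - ip₁ x y with hd
  have key : ∀ b : A, d * b + star b * star d = 0 := by
    intro b
    have h1 := step1 (x + smul₁ y b)
    rw [map_add, hFmod, expand₂, expand₁, step1 x, step1 y] at h1
    have hsd : star d = ip₂ (F y) (F x) - ip₁ y x := by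
      rw [hd, star_sub, hip₂star, hip₁star]
    have h3 : d * b + star b * star d
        = (ip₁ x x + ip₂ (F x) (F y) * b + star b * ip₂ (F y) (F x) + star b * (ip₁ y y * b))
          - (ip₁ x x + ip₁ x y * b + star b * ip₁ y x + star b * (ip₁ y y * b)) := by
      rw [hd, hsd]
      simp only [sub_mul, mul_sub]
      abel
    rw [h3, h1, sub_self]
  have hdd : d * star d = 0 := by
    have h4 := key (star d)
    rw [star_star] at h4
    have h5 : (2 : ℝ) • (d * star d) = 0 := by
      rw [two_smul]; exact h4
    exact (smul_eq_zero.mp h5).resolve_left (by norm_num)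
  have hd0 : d = 0 := (CStarRing.mul_star_self_eq_zero_iff d).mp hdd
  rw [hd] at hd0
  exact sub_eq_zero.mp hd0
end

section
/- Cuntz subequivalence can be checked via cut-downs: for positive elements a, b of a C*-algebra, a ≾ b if and only if (a − ε)₊ ≾ b for every ε > 0. -/
/-- Cuntz subequivalence: `a ≾ b` iff there is a sequence `rₙ` with `rₙ* b rₙ → a` in norm. -/
def CuntzSubequiv {A : Type*} [NormedRing A] [StarRing A] (a b : A) : Prop :=
  ∃ r : ℕ → A, Filter.Tendsto (fun n => star (r n) * b * r n) Filter.atTop (nhds a)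

/-- The cut-down `(a - ε)₊` is within `ε` of `a`. -/
lemma cutdown_norm_le {A : Type*} [CStarAlgebra A] [PartialOrder A] [StarOrderedRing A]
    (a : A) (ha : 0 ≤ a) (ε : ℝ) (hε : 0 < ε) :
    ‖cfc (fun x : ℝ => max (x - ε) 0) a - a‖ ≤ ε := by
  have key : cfc (fun x : ℝ => max (x - ε) 0 - x) a
      = cfc (fun x : ℝ => max (x - ε) 0) a - a := by
    rw [cfc_sub (fun x : ℝ => max (x - ε) 0) (fun x => x) a, cfc_id' ℝ a]
  rw [← key]
  apply norm_cfc_le hε.le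
  intro x hx
  have hx0 : 0 ≤ x := spectrum_nonneg_of_nonneg ha hx
  rw [Real.norm_eq_abs, abs_le]
  constructor <;> rcases le_total x ε with h | h <;>
    simp [max_eq_left, max_eq_right, sub_nonpos, *] <;> nlinarith

/-- The cut-down `(a - ε)₊` is exactly `g(a) a g(a)` for a suitable continuous `g`. -/
lemma cutdown_eq_conj {A : Type*} [CStarAlgebra A] [PartialOrder A] [StarOrderedRing A]
    (a : A) (ha : 0 ≤ a) (ε : ℝ) (hε : 0 < ε) :
    ∃ c : A, star c = c ∧ c * a * c = cfc (fun x : ℝ => max (x - ε) 0) a := by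
  set g : ℝ → ℝ := fun x => Real.sqrt (max (x - ε) 0 / max x ε) with hg
  have hgc : Continuous g := by
    apply Real.continuous_sqrt.comp
    apply Continuous.div
    · fun_prop
    · fun_prop
    · intro x
      have : (0:ℝ) < max x ε := lt_max_of_lt_right hε
      linarith
  have hgx : ∀ x : ℝ, g x * x * g x = max (x - ε) 0 := by
    intro x
    have hnum : 0 ≤ max (x - ε) 0 := le_max_right _ _
    have hden : (0:ℝ) < max x ε := lt_max_of_lt_right hε
    have hsq : g x * g x = max (x - ε) 0 / max x ε := by
      simpa [g] using Real.mul_self_sqrt (div_nonneg hnum hden.le)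
    calc g x * x * g x = (g x * g x) * x := by ring
    _ = max (x - ε) 0 := by
        rw [hsq]
        rcases le_total x ε with h | h
        · rw [max_eq_right (by linarith), zero_div, zero_mul]
        · rw [max_eq_left (by linarith), max_eq_left h, div_mul_cancel₀ _ (by linarith)]
  refine ⟨cfc g a, IsSelfAdjoint.cfc, ?_⟩
  calc cfc g a * a * cfc g a = cfc g a * cfc id a * cfc g a := by rw [cfc_id ℝ a]
  _ = cfc (fun x => g x * id x * g x) a := by
      rw [cfc_mul (fun x => g x * id x) g a ((hgc.mul continuous_id).continuousOn) hgc.continuousOn,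
        cfc_mul _ _ a hgc.continuousOn continuousOn_id]
  _ = cfc (fun x : ℝ => max (x - ε) 0) a := cfc_congr fun x _ => hgx x

/-- Rørdam's characterization: for positive `a b`,
`a ≾ b` iff `(a - ε)₊ ≾ b` for every `ε > 0`. -/
theorem stmt6 {A : Type*} [CStarAlgebra A] [PartialOrder A] [StarOrderedRing A]
    (a b : A) (ha : 0 ≤ a) (hb : 0 ≤ b) :
    CuntzSubequiv a b ↔
      ∀ ε : ℝ, 0 < ε → CuntzSubequiv (cfc (fun x : ℝ => max (x - ε) 0) a) b := by
  constructor
  · rintro ⟨r, hr⟩ ε hε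
    obtain ⟨c, hcs, hc⟩ := cutdown_eq_conj a ha ε hε
    refine ⟨fun n => r n * c, ?_⟩
    have hcont : Continuous fun x : A => c * x * c := by fun_prop
    have := (hcont.tendsto a).comp hr
    simp only [Function.comp_def] at this
    rw [hc] at this
    convert this using 2 with n
    simp only [star_mul, hcs]
    noncomm_ring
  · intro h
    have hsel : ∀ n : ℕ, ∃ s : A,
        dist (star s * b * s) a ≤ 2 / (n + 1) := by
      intro n
      have hpos : (0:ℝ) < 1 / (n + 1) := by positivity
      obtain ⟨r, hr⟩ := h (1 / (n + 1)) hpos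
      rw [Metric.tendsto_atTop] at hr
      obtain ⟨N, hN⟩ := hr (1 / (n + 1)) hpos
      refine ⟨r N, ?_⟩
      have h1 := hN N le_rfl
      have h2 : dist (cfc (fun x : ℝ => max (x - 1 / (n + 1)) 0) a) a ≤ 1 / (n + 1) := by
        rw [dist_eq_norm]
        exact cutdown_norm_le a ha _ hpos
      calc dist (star (r N) * b * r N) a
          ≤ dist (star (r N) * b * r N) (cfc (fun x : ℝ => max (x - 1 / (n + 1)) 0) a)
            + dist (cfc (fun x : ℝ => max (x - 1 / (n + 1)) 0) a) a := dist_triangle _ _ _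
        _ ≤ 2 / (n + 1) := by
            have : 2 / ((n:ℝ) + 1) = 1 / (n + 1) + 1 / (n + 1) := by ring
            linarith
    choose s hs using hsel
    refine ⟨s, ?_⟩
    rw [tendsto_iff_dist_tendsto_zero]
    apply squeeze_zero (fun n => dist_nonneg) hs
    have : Filter.Tendsto (fun n : ℕ => 1 / ((n:ℝ) + 1)) Filter.atTop (nhds 0) :=
      tendsto_one_div_add_atTop_nhds_zero_nat
    have h2 := this.const_mul 2
    simpa [mul_one_div, mul_zero, div_eq_mul_inv] using h2
end
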